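/- Let N2 be obtained from a negotiation N1 by applying the shortcut rule to an outcome (n,r) that unconditionally enables an atom n' ≠ n. Then N1 is sound if and only if N2 is sound. -/

import Mathlib

universe u v w

/-- A (distributed) negotiation over a finite set of agents, a type of atoms and a type
of result names.  `atoms` is the finite set of negotiation atoms, `n0`/`nf` the initial
and final atoms, `parties n` the parties of atom `n`, `results n` its finite set of
results, and `trans n p r` the set of atoms agent `p` is ready to engage in after the
outcome `(n, r)`. -/
structure Negotiation (Agent : Type u) (Atom : Type v) (Res : Type w)
    [Fintype Agent] [DecidableEq Agent] [DecidableEq Atom] [DecidableEq Res] where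
  atoms : Finset Atom
  n0 : Atom
  nf : Atom
  parties : Atom → Finset Agent
  results : Atom → Finset Res
  trans : Atom → Agent → Res → Finset Atom
  n0_mem : n0 ∈ atoms
  nf_mem : nf ∈ atoms
  parties_nonempty : ∀ n ∈ atoms, (parties n).Nonempty
  results_nonempty : ∀ n ∈ atoms, (results n).Nonempty
  parties_n0 : parties n0 = Finset.univ
  parties_nf : parties nf = Finset.univ
  trans_sub : ∀ n ∈ atoms, ∀ p ∈ parties n, ∀ r ∈ results n, trans n p r ⊆ atoms
  trans_parties : ∀ n ∈ atoms, ∀ p ∈ parties n, ∀ r ∈ results n, ∀ n' ∈ trans n p r, p ∈ parties n'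
  trans_empty_iff : ∀ n ∈ atoms, ∀ p ∈ parties n, ∀ r ∈ results n, (trans n p r = ∅ ↔ n = nf)
  on_path : ∀ n ∈ atoms,
    Relation.ReflTransGen (fun a b => ∃ p ∈ parties a, ∃ r ∈ results a, b ∈ trans a p r) n0 n ∧
    Relation.ReflTransGen (fun a b => ∃ p ∈ parties a, ∃ r ∈ results a, b ∈ trans a p r) n nf

namespace Negotiation

variable {Agent : Type u} {Atom : Type v} {Res : Type w}
variable [Fintype Agent] [DecidableEq Agent] [DecidableEq Atom] [DecidableEq Res]

/-- A marking assigns to each agent the set of atoms it is ready to engage in. -/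
def Marking (Agent : Type u) (Atom : Type v) : Type (max u v) := Agent → Finset Atom

/-- A marking enables an atom if every party of the atom is ready to engage in it. -/
def Enables (N : Negotiation Agent Atom Res) (x : Marking Agent Atom) (n : Atom) : Prop :=
  n ∈ N.atoms ∧ ∀ p ∈ N.parties n, n ∈ x p

/-- Small step: the occurrence of the outcome `o = (n, r)` from marking `x` yields `y`. -/
def StepTo (N : Negotiation Agent Atom Res) (x : Marking Agent Atom) (o : Atom × Res)
    (y : Marking Agent Atom) : Prop :=
  N.Enables x o.1 ∧ o.2 ∈ N.results o.1 ∧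
    ∀ p, y p = if p ∈ N.parties o.1 then N.trans o.1 p o.2 else x p

/-- Occurrence sequences: `Seq N x σ y` means the finite sequence of outcomes `σ`
can occur from marking `x` and leads to marking `y`. -/
inductive Seq (N : Negotiation Agent Atom Res) :
    Marking Agent Atom → List (Atom × Res) → Marking Agent Atom → Prop
  | nil (x : Marking Agent Atom) : Seq N x [] x
  | cons {x y z : Marking Agent Atom} {o : Atom × Res} {σ : List (Atom × Res)} :
      N.StepTo x o y → Seq N y σ z → Seq N x (o :: σ) z

/-- The initial marking. -/
def x0 (N : Negotiation Agent Atom Res) : Marking Agent Atom := fun _ => {N.n0}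

/-- The final marking. -/
def xf (_N : Negotiation Agent Atom Res) : Marking Agent Atom := fun _ => ∅

/-- A marking is reachable if some occurrence sequence leads to it from the initial marking. -/
def Reachable (N : Negotiation Agent Atom Res) (x : Marking Agent Atom) : Prop :=
  ∃ σ, N.Seq N.x0 σ x

/-- A large step is an occurrence sequence from the initial to the final marking. -/
def LargeStep (N : Negotiation Agent Atom Res) (σ : List (Atom × Res)) : Prop :=
  N.Seq N.x0 σ N.xf

/-- Soundness: every atom is enabled at some reachable marking, and from every
reachable marking the final marking is reachable. -/
def Sound (N : Negotiation Agent Atom Res) : Prop :=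
  (∀ n ∈ N.atoms, ∃ x, N.Reachable x ∧ N.Enables x n) ∧
  (∀ x, N.Reachable x → ∃ τ, N.Seq x τ N.xf)

/-- An agent is deterministic if it is never ready to engage in more than one atom. -/
def DeterministicAgent (N : Negotiation Agent Atom Res) (p : Agent) : Prop :=
  ∀ n ∈ N.atoms, n ≠ N.nf → p ∈ N.parties n → ∀ r ∈ N.results n, ∃ n', N.trans n p r = {n'}

/-- A negotiation is deterministic if all its agents are. -/
def Deterministic (N : Negotiation Agent Atom Res) : Prop := ∀ p, N.DeterministicAgent p

/-- Weak determinism: for every `(n, p, r)` there is a deterministic agent which is a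
party of every atom in `trans n p r`. -/
def WeaklyDeterministic (N : Negotiation Agent Atom Res) : Prop :=
  ∀ n ∈ N.atoms, ∀ p ∈ N.parties n, ∀ r ∈ N.results n,
    ∃ b, N.DeterministicAgent b ∧ ∀ n' ∈ N.trans n p r, b ∈ N.parties n'

/-- The edge relation of the graph of a negotiation. -/
def Edge (N : Negotiation Agent Atom Res) (a b : Atom) : Prop :=
  a ∈ N.atoms ∧ b ∈ N.atoms ∧ ∃ p ∈ N.parties a, ∃ r ∈ N.results a, b ∈ N.trans a p r

/-- A negotiation is acyclic if its graph has no cycles. -/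
def Acyclic (N : Negotiation Agent Atom Res) : Prop :=
  ∀ n, ¬ Relation.TransGen N.Edge n n

/-- The arc `(n, p, r, n')` occurs in the occurrence sequence `σ`. -/
def ArcOccursIn (N : Negotiation Agent Atom Res) (n : Atom) (p : Agent) (r : Res) (n' : Atom)
    (σ : List (Atom × Res)) : Prop :=
  ∃ (σ1 σ2 σ3 : List (Atom × Res)) (r' : Res), r' ∈ N.results n' ∧
    σ = σ1 ++ (n, r) :: σ2 ++ (n', r') :: σ3 ∧ ∀ o ∈ σ2, p ∉ N.parties o.1

/-- The outcome `(n, r)` unconditionally enables the atom `n'`. -/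
def UncondEnables (N : Negotiation Agent Atom Res) (n : Atom) (r : Res) (n' : Atom) : Prop :=
  N.parties n' ⊆ N.parties n ∧ ∀ p ∈ N.parties n', N.trans n p r = {n'}

/-- The outcome `(n, r)` has exclusive access to the atom `n'`. -/
def ExclusiveAccess (N : Negotiation Agent Atom Res) (n : Atom) (r : Res) (n' : Atom) : Prop :=
  ∀ p ∈ N.parties n', n' ∈ N.trans n p r ∧
    ∀ m ∈ N.atoms, ∀ r'' ∈ N.results m, (m, r'') ≠ (n, r) → n' ∉ N.trans m p r''

/-- The outcome `(m, r'')` commits to the atom `n'`. -/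
def CommitsTo (N : Negotiation Agent Atom Res) (m : Atom) (r'' : Res) (n' : Atom) : Prop :=
  ∃ p ∈ N.parties m, N.trans m p r'' = {n'}

/-- The merge rule: two results of a non-final atom with identical transition functions
are merged into a fresh result. -/
def MergeRule (N1 N2 : Negotiation Agent Atom Res) : Prop :=
  ∃ (n : Atom) (r1 r2 r : Res), n ∈ N1.atoms ∧ n ≠ N1.nf ∧
    r1 ∈ N1.results n ∧ r2 ∈ N1.results n ∧ r1 ≠ r2 ∧
    (∀ p ∈ N1.parties n, N1.trans n p r1 = N1.trans n p r2) ∧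
    r ∉ N1.results n ∧
    N2.atoms = N1.atoms ∧ N2.n0 = N1.n0 ∧ N2.nf = N1.nf ∧ N2.parties = N1.parties ∧
    N2.results n = insert r (((N1.results n).erase r1).erase r2) ∧
    (∀ m, m ≠ n → N2.results m = N1.results m) ∧
    (∀ p, N2.trans n p r = N1.trans n p r1) ∧
    (∀ p, ∀ r'' ∈ ((N1.results n).erase r1).erase r2, N2.trans n p r'' = N1.trans n p r'') ∧
    (∀ m, m ≠ n → N2.trans m = N1.trans m)

/-- The iteration rule: a result after which all parties return to the same atom is removed. -/
def IterationRule (N1 N2 : Negotiation Agent Atom Res) : Prop :=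
  ∃ (n : Atom) (r : Res), n ∈ N1.atoms ∧ r ∈ N1.results n ∧
    (∀ p ∈ N1.parties n, N1.trans n p r = {n}) ∧
    N2.atoms = N1.atoms ∧ N2.n0 = N1.n0 ∧ N2.nf = N1.nf ∧ N2.parties = N1.parties ∧
    N2.results n = (N1.results n).erase r ∧
    (∀ m, m ≠ n → N2.results m = N1.results m) ∧
    N2.trans = N1.trans

/-- The useless arc rule: under the guard consisting of three distinct arcs
`(n,p,r,n')`, `(n,p,r,n'')`, `(n,q,r,n')` with `trans n q r = {n'}`, the arc
`(n,p,r,n'')` is removed (and the result is again a negotiation, since `N2` is one). -/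
def UselessArcRule (N1 N2 : Negotiation Agent Atom Res) : Prop :=
  ∃ (n : Atom) (p q : Agent) (r : Res) (n' n'' : Atom),
    n ∈ N1.atoms ∧ p ∈ N1.parties n ∧ q ∈ N1.parties n ∧ r ∈ N1.results n ∧
    p ≠ q ∧ n' ≠ n'' ∧
    n' ∈ N1.trans n p r ∧ n'' ∈ N1.trans n p r ∧ N1.trans n q r = {n'} ∧
    N2.atoms = N1.atoms ∧ N2.n0 = N1.n0 ∧ N2.nf = N1.nf ∧
    N2.parties = N1.parties ∧ N2.results = N1.results ∧
    N2.trans n p r = (N1.trans n p r).erase n'' ∧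
    (∀ (m : Atom) (p' : Agent) (r' : Res), (m, p', r') ≠ (n, p, r) →
      N2.trans m p' r' = N1.trans m p' r')

/-- The shortcut rule applied to the outcome `(n, r)` which unconditionally enables `n'`,
using `f` to produce the fresh result names `r'_s = f r'`. -/
def ShortcutRuleAt (N1 N2 : Negotiation Agent Atom Res) (n : Atom) (r : Res) (n' : Atom)
    (f : Res → Res) : Prop :=
  n ∈ N1.atoms ∧ n' ∈ N1.atoms ∧ r ∈ N1.results n ∧ n' ≠ n ∧
  N1.UncondEnables n r n' ∧
  ((n' ≠ N1.nf ∧ N1.ExclusiveAccess n r n') ∨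
   (n' ≠ N1.nf ∧ ∃ (m : Atom) (r'' : Res), m ∈ N1.atoms ∧ r'' ∈ N1.results m ∧
      (m, r'') ≠ (n, r) ∧ N1.CommitsTo m r'' n') ∨
   (n' = N1.nf ∧ N1.ExclusiveAccess n r n' ∧ N1.results n = {r})) ∧
  Set.InjOn f ↑(N1.results n') ∧ (∀ r' ∈ N1.results n', f r' ∉ N1.results n) ∧
  N2.n0 = N1.n0 ∧ N2.parties = N1.parties ∧
  N2.results n = ((N1.results n).erase r) ∪ (N1.results n').image f ∧
  (∀ m, m ≠ n → N2.results m = N1.results m) ∧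
  (∀ r' ∈ N1.results n', ∀ p ∈ N1.parties n', N2.trans n p (f r') = N1.trans n' p r') ∧
  (∀ r' ∈ N1.results n', ∀ p ∈ N1.parties n, p ∉ N1.parties n' →
      N2.trans n p (f r') = N1.trans n p r) ∧
  (∀ r'' ∈ (N1.results n).erase r, ∀ p, N2.trans n p r'' = N1.trans n p r'') ∧
  (∀ m, m ≠ n → N2.trans m = N1.trans m) ∧
  (N1.ExclusiveAccess n r n' → N2.atoms = N1.atoms.erase n') ∧
  (¬ N1.ExclusiveAccess n r n' → N2.atoms = N1.atoms) ∧
  ((n' = N1.nf ∧ N1.ExclusiveAccess n r n') → N2.nf = n) ∧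
  (¬ (n' = N1.nf ∧ N1.ExclusiveAccess n r n') → N2.nf = N1.nf)

/-- The shortcut rule as a relation between negotiations. -/
def ShortcutRule (N1 N2 : Negotiation Agent Atom Res) : Prop :=
  ∃ n r n' f, ShortcutRuleAt N1 N2 n r n' f

/-- The deterministic shortcut rule: the shortcut rule restricted to the case where the
unconditionally enabled atom has at most one result. -/
def DShortcutRule (N1 N2 : Negotiation Agent Atom Res) : Prop :=
  ∃ n r n' f, ShortcutRuleAt N1 N2 n r n' f ∧ (N1.results n').card ≤ 1

/-- A negotiation is irreducible if none of the four reduction rules is applicable. -/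
def Irreducible (N : Negotiation Agent Atom Res) : Prop :=
  ∀ N' : Negotiation Agent Atom Res,
    ¬ (MergeRule N N' ∨ IterationRule N N' ∨ UselessArcRule N N' ∨ ShortcutRule N N')

/-- The marking `x_n` that puts exactly the parties of `n` on `n`. -/
def xAt (N : Negotiation Agent Atom Res) (n : Atom) : Marking Agent Atom :=
  fun p => if p ∈ N.parties n then {n} else ∅

/-- An `(n, r)`-sequence: a finite occurrence sequence from `x_n` starting with the
outcome `(n, r)` all of whose atoms have their parties included in the parties of `n`. -/
def NRSeq (N : Negotiation Agent Atom Res) (n : Atom) (r : Res)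
    (σ : List (Atom × Res)) : Prop :=
  (∃ τ, σ = (n, r) :: τ) ∧ (∃ y, N.Seq (N.xAt n) σ y) ∧
    ∀ o ∈ σ, N.parties o.1 ⊆ N.parties n

/-- The index of the outcome `(n, r)`: the length of a longest (maximal) `(n,r)`-sequence
minus one. -/
noncomputable def outcomeIndex (N : Negotiation Agent Atom Res) (n : Atom) (r : Res) : ℕ :=
  sSup {l : ℕ | ∃ σ, N.NRSeq n r σ ∧ σ.length = l} - 1

/-- The index of a negotiation: the sum of the indices of all non-final outcomes. -/
noncomputable def negIndex (N : Negotiation Agent Atom Res) : ℕ :=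
  (N.atoms.filter (fun n => n ≠ N.nf)).sum
    (fun n => (N.results n).sum (fun r => N.outcomeIndex n r))

/-- An `n`-sequence: an `(n, r)`-sequence for some result `r` of `n`. -/
def NSeq (N : Negotiation Agent Atom Res) (n : Atom) (σ : List (Atom × Res)) : Prop :=
  (∃ r ∈ N.results n, ∃ τ, σ = (n, r) :: τ) ∧ (∃ y, N.Seq (N.xAt n) σ y) ∧
    ∀ o ∈ σ, N.parties o.1 ⊆ N.parties n

/-- A maximal `n`-sequence: it cannot be extended to a longer `n`-sequence. -/
def MaximalNSeq (N : Negotiation Agent Atom Res) (n : Atom) (σ : List (Atom × Res)) : Prop :=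
  N.NSeq n σ ∧ ∀ o : Atom × Res, ¬ N.NSeq n (σ ++ [o])

/-- An outcome `(n, r)` is uniform: all parties of `n` move to the same set of atoms. -/
def Uniform (N : Negotiation Agent Atom Res) (n : Atom) (r : Res) : Prop :=
  ∀ p ∈ N.parties n, ∀ q ∈ N.parties n, N.trans n p r = N.trans n q r

/-- A replication: all atoms have the same parties and all outcomes are uniform. -/
def Replication (N : Negotiation Agent Atom Res) : Prop :=
  (∀ n ∈ N.atoms, ∀ m ∈ N.atoms, N.parties n = N.parties m) ∧
  (∀ n ∈ N.atoms, ∀ r ∈ N.results n, N.Uniform n r)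

/-- A path of a negotiation: a list of triples `(nᵢ, pᵢ, rᵢ)` with `nᵢ₊₁ ∈ trans nᵢ pᵢ rᵢ`. -/
def IsPath (N : Negotiation Agent Atom Res) (π : List (Atom × Agent × Res)) : Prop :=
  (∀ t ∈ π, t.1 ∈ N.atoms ∧ t.2.1 ∈ N.parties t.1 ∧ t.2.2 ∈ N.results t.1) ∧
  π.Chain' (fun s t => t.1 ∈ N.trans s.1 s.2.1 s.2.2)

/-- A loop: a nonempty sequence of outcomes leading from some reachable marking back to itself. -/
def IsLoop (N : Negotiation Agent Atom Res) (σ : List (Atom × Res)) : Prop :=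
  σ ≠ [] ∧ ∃ x, N.Reachable x ∧ N.Seq x σ x

end Negotiation

namespace Negotiation
variable {Agent : Type u} {Atom : Type v} {Res : Type w}
variable [Fintype Agent] [DecidableEq Agent] [DecidableEq Atom] [DecidableEq Res]


section Aux
variable {N : Negotiation Agent Atom Res}

lemma seq_append {x y z : Marking Agent Atom} {σ τ : List (Atom × Res)}
    (h1 : N.Seq x σ y) (h2 : N.Seq y τ z) : N.Seq x (σ ++ τ) z := by
  induction h1 with
  | nil => simpa using h2
  | cons hs _ ih => exact Seq.cons hs (ih h2)

lemma seq_unchanged {x y : Marking Agent Atom} {σ : List (Atom × Res)}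
    (h1 : N.Seq x σ y) (p : Agent) (hp : ∀ o ∈ σ, p ∉ N.parties o.1) : y p = x p := by
  induction h1 with
  | nil => rfl
  | @cons x y z o σ hs _ ih =>
    have h2 := ih (fun o ho => hp o (List.mem_cons_of_mem _ ho))
    rw [h2, hs.2.2 p, if_neg (hp o List.mem_cons_self)]

lemma reachable_step {x y : Marking Agent Atom} {o : Atom × Res}
    (hx : N.Reachable x) (hs : N.StepTo x o y) : N.Reachable y := by
  obtain ⟨σ, hσ⟩ := hx
  exact ⟨σ ++ [o], seq_append hσ (Seq.cons hs (Seq.nil _))⟩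

lemma seq_sub_atoms {x y : Marking Agent Atom} {σ : List (Atom × Res)}
    (h1 : N.Seq x σ y) (hx : ∀ p, x p ⊆ N.atoms) : ∀ p, y p ⊆ N.atoms := by
  induction h1 with
  | nil => exact hx
  | @cons x y z o σ hs _ ih =>
    refine ih (fun p => ?_)
    rw [hs.2.2 p]
    split
    · exact N.trans_sub o.1 hs.1.1 p (by assumption) o.2 hs.2.1
    · exact hx p

lemma reachable_sub_atoms {x : Marking Agent Atom} (hx : N.Reachable x) :
    ∀ p, x p ⊆ N.atoms := by
  obtain ⟨σ, hσ⟩ := hx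
  refine seq_sub_atoms hσ (fun p => ?_)
  intro a ha
  simp only [x0, Finset.mem_singleton] at ha
  subst ha; exact N.n0_mem

lemma step_comm {x y z : Marking Agent Atom} {a b : Atom × Res}
    (h1 : N.StepTo x a y) (h2 : N.StepTo y b z)
    (hdis : ∀ p ∈ N.parties b.1, p ∉ N.parties a.1) :
    ∃ y', N.StepTo x b y' ∧ N.StepTo y' a z := by
  refine ⟨fun p => if p ∈ N.parties b.1 then N.trans b.1 p b.2 else x p, ⟨⟨h2.1.1, ?_⟩, h2.2.1, fun p => rfl⟩, ⟨⟨h1.1.1, ?_⟩, h1.2.1, ?_⟩⟩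
  · intro p hp
    have := h2.1.2 p hp
    rwa [h1.2.2 p, if_neg (hdis p hp)] at this
  · intro p hp
    have hnb : p ∉ N.parties b.1 := fun hb => hdis p hb hp
    simpa [if_neg hnb] using h1.1.2 p hp
  · intro p
    rw [h2.2.2 p, h1.2.2 p]
    by_cases hb : p ∈ N.parties b.1
    · simp only [if_pos hb, if_neg (hdis p hb)]
    · by_cases ha : p ∈ N.parties a.1 <;> simp only [if_pos, if_neg, ha, hb, if_true, if_false]

end Aux


section SC
variable {N1 N2 : Negotiation Agent Atom Res} {n n' : Atom} {r : Res} {f : Res → Res}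

lemma sc_atoms_sub (h : ShortcutRuleAt N1 N2 n r n' f) : N2.atoms ⊆ N1.atoms := by
  obtain ⟨hn1, hn'1, hr1, hnn, hUE, hcases, hinj, hfnew, hn0, hpar, hresn, hreso,
    htr1, htr2, htr3, htr4, hatE, hatNE, hnfE, hnfNE⟩ := h
  by_cases hE : N1.ExclusiveAccess n r n'
  · rw [hatE hE]; exact Finset.erase_subset _ _
  · rw [hatNE hE]

lemma sc_n_mem2 (h : ShortcutRuleAt N1 N2 n r n' f) : n ∈ N2.atoms := by
  obtain ⟨hn1, hn'1, hr1, hnn, hUE, hcases, hinj, hfnew, hn0, hpar, hresn, hreso,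
    htr1, htr2, htr3, htr4, hatE, hatNE, hnfE, hnfNE⟩ := h
  by_cases hE : N1.ExclusiveAccess n r n'
  · rw [hatE hE]; exact Finset.mem_erase.2 ⟨hnn.symm, hn1⟩
  · rw [hatNE hE]; exact hn1

lemma sc_mem2_of_ne (h : ShortcutRuleAt N1 N2 n r n' f) {m : Atom}
    (hm : m ∈ N1.atoms) (hne : m ≠ n') : m ∈ N2.atoms := by
  obtain ⟨hn1, hn'1, hr1, hnn, hUE, hcases, hinj, hfnew, hn0, hpar, hresn, hreso,
    htr1, htr2, htr3, htr4, hatE, hatNE, hnfE, hnfNE⟩ := h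
  by_cases hE : N1.ExclusiveAccess n r n'
  · rw [hatE hE]; exact Finset.mem_erase.2 ⟨hne, hm⟩
  · rw [hatNE hE]; exact hm

lemma sc_n'_not_mem2 (h : ShortcutRuleAt N1 N2 n r n' f)
    (hE : N1.ExclusiveAccess n r n') : n' ∉ N2.atoms := by
  rw [h.2.2.2.2.2.2.2.2.2.2.2.2.2.2.2.2.1 hE]
  exact Finset.notMem_erase _ _

lemma sc_n'_mem2 (h : ShortcutRuleAt N1 N2 n r n' f)
    (hE : ¬ N1.ExclusiveAccess n r n') : n' ∈ N2.atoms := by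
  rw [h.2.2.2.2.2.2.2.2.2.2.2.2.2.2.2.2.2.1 hE]
  exact h.2.1

lemma sc_trans_no_n' (h : ShortcutRuleAt N1 N2 n r n' f)
    (hE : N1.ExclusiveAccess n r n') {m : Atom} {s : Res} {p : Agent}
    (hm : m ∈ N1.atoms) (hp : p ∈ N1.parties m) (hs : s ∈ N1.results m)
    (hne : (m, s) ≠ (n, r)) : n' ∉ N1.trans m p s := by
  by_cases hp' : p ∈ N1.parties n'
  · exact (hE p hp').2 m hm s hs hne
  · intro hmem
    exact hp' (N1.trans_parties m hm p hp s hs n' hmem)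

lemma sc_step_inv (h : ShortcutRuleAt N1 N2 n r n' f)
    (hE : N1.ExclusiveAccess n r n') {x y : Marking Agent Atom} {o : Atom × Res}
    (hst : N1.StepTo x o y) (hne : o ≠ (n, r)) (hinv : ∀ p, n' ∉ x p) :
    ∀ p, n' ∉ y p := by
  intro p
  rw [hst.2.2 p]
  split
  · exact sc_trans_no_n' h hE hst.1.1 (by assumption) hst.2.1
      (by rintro hh; exact hne (Prod.ext (congrArg Prod.fst hh) (congrArg Prod.snd hh)))
  · exact hinv p

lemma sc_step12 (h : ShortcutRuleAt N1 N2 n r n' f) {x y : Marking Agent Atom}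
    {m : Atom} {s : Res} (hst : N1.StepTo x (m, s) y) (hne : (m, s) ≠ (n, r))
    (hm2 : m ∈ N2.atoms) : N2.StepTo x (m, s) y := by
  obtain ⟨hn1, hn'1, hr1, hnn, hUE, hcases, hinj, hfnew, hn0, hpar, hresn, hreso,
    htr1, htr2, htr3, htr4, hatE, hatNE, hnfE, hnfNE⟩ := h
  have htr : ∀ p, N2.trans m p s = N1.trans m p s := by
    intro p
    by_cases hmn : m = n
    · subst hmn
      have hsr : s ≠ r := by rintro rfl; exact hne rfl
      exact htr3 s (Finset.mem_erase.2 ⟨hsr, hst.2.1⟩) p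
    · rw [htr4 m hmn]
  have hres : s ∈ N2.results m := by
    by_cases hmn : m = n
    · subst hmn
      have hsr : s ≠ r := by rintro rfl; exact hne rfl
      rw [hresn]
      exact Finset.mem_union_left _ (Finset.mem_erase.2 ⟨hsr, hst.2.1⟩)
    · rw [hreso m hmn]; exact hst.2.1
  refine ⟨⟨hm2, ?_⟩, hres, ?_⟩
  · rw [hpar]; exact hst.1.2
  · intro p
    rw [hst.2.2 p, hpar, htr p]

lemma sc_step21 (h : ShortcutRuleAt N1 N2 n r n' f) {x y : Marking Agent Atom}
    {m : Atom} {s : Res} (hst : N2.StepTo x (m, s) y)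
    (hcase : m ≠ n ∨ s ∈ (N1.results n).erase r) : N1.StepTo x (m, s) y := by
  obtain ⟨hn1, hn'1, hr1, hnn, hUE, hcases, hinj, hfnew, hn0, hpar, hresn, hreso,
    htr1, htr2, htr3, htr4, hatE, hatNE, hnfE, hnfNE⟩ := h
  have hm1 : m ∈ N1.atoms := sc_atoms_sub ⟨hn1, hn'1, hr1, hnn, hUE, hcases, hinj,
    hfnew, hn0, hpar, hresn, hreso, htr1, htr2, htr3, htr4, hatE, hatNE, hnfE, hnfNE⟩ hst.1.1
  have htr : ∀ p, N2.trans m p s = N1.trans m p s := by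
    intro p
    rcases hcase with hmn | hs
    · rw [htr4 m hmn]
    · by_cases hmn : m = n
      · subst hmn; exact htr3 s hs p
      · rw [htr4 m hmn]
  have hres : s ∈ N1.results m := by
    by_cases hmn : m = n
    · subst hmn
      rcases hcase with hmn | hs
      · exact absurd rfl hmn
      · exact Finset.mem_of_mem_erase hs
    · rw [← hreso m hmn]; exact hst.2.1
  refine ⟨⟨hm1, ?_⟩, hres, ?_⟩
  · rw [← hpar]; exact hst.1.2
  · intro p
    rw [hst.2.2 p, hpar, htr p]

lemma sc_fuse12 (h : ShortcutRuleAt N1 N2 n r n' f) {x x1 x2 : Marking Agent Atom}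
    {r' : Res} (h1 : N1.StepTo x (n, r) x1) (h2 : N1.StepTo x1 (n', r') x2) :
    N2.StepTo x (n, f r') x2 := by
  obtain ⟨hn1, hn'1, hr1, hnn, hUE, hcases, hinj, hfnew, hn0, hpar, hresn, hreso,
    htr1, htr2, htr3, htr4, hatE, hatNE, hnfE, hnfNE⟩ := h
  have hr' : r' ∈ N1.results n' := h2.2.1
  refine ⟨⟨sc_n_mem2 ⟨hn1, hn'1, hr1, hnn, hUE, hcases, hinj, hfnew, hn0, hpar, hresn,
    hreso, htr1, htr2, htr3, htr4, hatE, hatNE, hnfE, hnfNE⟩, ?_⟩, ?_, ?_⟩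
  · rw [hpar]; exact h1.1.2
  · rw [hresn]
    exact Finset.mem_union_right _ (Finset.mem_image.2 ⟨r', hr', rfl⟩)
  · intro p
    rw [h2.2.2 p, h1.2.2 p, hpar]
    by_cases hp' : p ∈ N1.parties n'
    · have hp : p ∈ N1.parties n := hUE.1 hp'
      simp only [if_pos hp', if_pos hp, htr1 r' hr' p hp']
    · by_cases hp : p ∈ N1.parties n
      · simp only [if_neg hp', if_pos hp, htr2 r' hr' p hp hp']
      · simp only [if_neg hp', if_neg hp]

lemma sc_fuse21 (h : ShortcutRuleAt N1 N2 n r n' f) {x y : Marking Agent Atom}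
    {r' : Res} (hr' : r' ∈ N1.results n') (hst : N2.StepTo x (n, f r') y) :
    ∃ x1, N1.StepTo x (n, r) x1 ∧ N1.StepTo x1 (n', r') y := by
  obtain ⟨hn1, hn'1, hr1, hnn, hUE, hcases, hinj, hfnew, hn0, hpar, hresn, hreso,
    htr1, htr2, htr3, htr4, hatE, hatNE, hnfE, hnfNE⟩ := h
  refine ⟨fun p => if p ∈ N1.parties n then N1.trans n p r else x p,
    ⟨⟨hn1, ?_⟩, hr1, fun p => rfl⟩, ⟨⟨hn'1, ?_⟩, hr', ?_⟩⟩
  · rw [← hpar]; exact hst.1.2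
  · intro p hp'
    have hp : p ∈ N1.parties n := hUE.1 hp'
    simp only [if_pos hp, hUE.2 p hp', Finset.mem_singleton]
  · intro p
    rw [hst.2.2 p, hpar]
    by_cases hp' : p ∈ N1.parties n'
    · have hp : p ∈ N1.parties n := hUE.1 hp'
      simp only [if_pos hp', if_pos hp, htr1 r' hr' p hp']
    · by_cases hp : p ∈ N1.parties n
      · simp only [if_neg hp', if_pos hp, htr2 r' hr' p hp hp']
      · simp only [if_neg hp', if_neg hp]

end SC


section SC2
variable {N1 N2 : Negotiation Agent Atom Res} {n n' : Atom} {r : Res} {f : Res → Res}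

lemma sc_hUE (h : ShortcutRuleAt N1 N2 n r n' f) : N1.UncondEnables n r n' :=
  h.2.2.2.2.1

lemma sc_hpar (h : ShortcutRuleAt N1 N2 n r n' f) : N2.parties = N1.parties :=
  h.2.2.2.2.2.2.2.2.2.1

lemma sc_resn (h : ShortcutRuleAt N1 N2 n r n' f) :
    N2.results n = ((N1.results n).erase r) ∪ (N1.results n').image f := by
  obtain ⟨hn1, hn'1, hr1, hnn, hUE, hcases, hinj, hfnew, hn0, hpar, hresn, hreso,
    htr1, htr2, htr3, htr4, hatE, hatNE, hnfE, hnfNE⟩ := h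
  exact hresn

lemma sc_reso (h : ShortcutRuleAt N1 N2 n r n' f) :
    ∀ m, m ≠ n → N2.results m = N1.results m := by
  obtain ⟨hn1, hn'1, hr1, hnn, hUE, hcases, hinj, hfnew, hn0, hpar, hresn, hreso,
    htr1, htr2, htr3, htr4, hatE, hatNE, hnfE, hnfNE⟩ := h
  exact hreso

lemma sc_P'_nonempty (h : ShortcutRuleAt N1 N2 n r n' f) :
    (N1.parties n').Nonempty := N1.parties_nonempty n' h.2.1

/-- Forward conversion: every occurrence sequence of N2 yields one of N1 with the
same start and end markings. -/
lemma sc_fwd (h : ShortcutRuleAt N1 N2 n r n' f) {x y : Marking Agent Atom}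
    {σ : List (Atom × Res)} (hs : N2.Seq x σ y) : ∃ σ', N1.Seq x σ' y := by
  induction hs with
  | nil => exact ⟨[], Seq.nil _⟩
  | @cons x y z o σ hst _ ih =>
    obtain ⟨σ', hσ'⟩ := ih
    obtain ⟨m, s⟩ := o
    by_cases hmn : m = n
    · subst hmn
      have hmem := hst.2.1
      rw [sc_resn h] at hmem
      rcases Finset.mem_union.1 hmem with herase | himg
      · exact ⟨(m, s) :: σ', Seq.cons (sc_step21 h hst (Or.inr herase)) hσ'⟩
      · obtain ⟨r', hr', hfr⟩ := Finset.mem_image.1 himg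
        subst hfr
        obtain ⟨x1, h1, h2⟩ := sc_fuse21 h hr' hst
        exact ⟨(m, r) :: (n', r') :: σ', Seq.cons h1 (Seq.cons h2 hσ')⟩
    · exact ⟨(m, s) :: σ', Seq.cons (sc_step21 h hst (Or.inl hmn)) hσ'⟩

/-- Replay of a sequence not involving the parties of `n'` from a marking agreeing
outside those parties, inside N2. -/
lemma sc_replay (h : ShortcutRuleAt N1 N2 n r n' f) {w y : Marking Agent Atom}
    {γ : List (Atom × Res)} (hs : N1.Seq w γ y)
    (hγ : ∀ o ∈ γ, ∀ p ∈ N1.parties n', p ∉ N1.parties o.1)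
    {u : Marking Agent Atom} (hu : ∀ p, p ∉ N1.parties n' → u p = w p) :
    ∃ y', N2.Seq u γ y' ∧ (∀ p, p ∉ N1.parties n' → y' p = y p) ∧
      (∀ p ∈ N1.parties n', y' p = u p) := by
  induction hs generalizing u with
  | nil => exact ⟨u, Seq.nil _, hu, fun _ _ => rfl⟩
  | @cons x y z o σ hst hseq ih =>
    obtain ⟨m, s⟩ := o
    have ho := hγ (m, s) List.mem_cons_self
    obtain ⟨p₀, hp₀⟩ := sc_P'_nonempty h
    have hon : m ≠ n := by
      rintro rfl
      exact ho p₀ hp₀ ((sc_hUE h).1 hp₀)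
    have hon' : m ≠ n' := by
      rintro rfl
      exact ho p₀ hp₀ hp₀
    set u1 : Marking Agent Atom :=
      fun p => if p ∈ N1.parties m then N1.trans m p s else u p with hu1
    have hst1 : N1.StepTo u (m, s) u1 := by
      refine ⟨⟨hst.1.1, fun p hp => ?_⟩, hst.2.1, fun p => rfl⟩
      rw [hu p (fun hp' => ho p hp' hp)]
      exact hst.1.2 p hp
    have hst2 : N2.StepTo u (m, s) u1 :=
      sc_step12 h hst1 (by simp [hon]) (sc_mem2_of_ne h hst.1.1 hon')
    have hu' : ∀ p, p ∉ N1.parties n' → u1 p = y p := by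
      intro p hp'
      rw [hu1, hst.2.2 p]
      by_cases hpm : p ∈ N1.parties m
      · simp [hpm]
      · simp [hpm, hu p hp']
    obtain ⟨y', h1, h2, h3⟩ := ih (fun o ho' => hγ o (List.mem_cons_of_mem _ ho')) hu'
    refine ⟨y', Seq.cons hst2 h1, h2, fun p hp' => ?_⟩
    rw [h3 p hp', hu1]
    simp [fun hpm => ho p hp' hpm]

/-- From a marking where all parties of `n'` sit exactly on `n'`, a sequence either
never involves a party of `n'`, or some occurrence of `n'` can be commuted to the front. -/
lemma sc_pending (h : ShortcutRuleAt N1 N2 n r n' f) {w y : Marking Agent Atom}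
    {τ : List (Atom × Res)} (hs : N1.Seq w τ y)
    (hw : ∀ p ∈ N1.parties n', w p = {n'}) :
    (∀ o ∈ τ, ∀ p ∈ N1.parties n', p ∉ N1.parties o.1) ∨
    ∃ γ r' δ w', τ = γ ++ (n', r') :: δ ∧
      (∀ o ∈ γ, ∀ p ∈ N1.parties n', p ∉ N1.parties o.1) ∧
      N1.StepTo w (n', r') w' ∧ N1.Seq w' (γ ++ δ) y := by
  induction hs with
  | nil => left; simp
  | @cons x y z o σ hst hseq ih =>
    by_cases hoP : ∀ p ∈ N1.parties n', p ∉ N1.parties o.1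
    · have hy : ∀ p ∈ N1.parties n', y p = {n'} := by
        intro p hp
        rw [hst.2.2 p, if_neg (hoP p hp)]
        exact hw p hp
      rcases ih hy with hl | ⟨γ, r', δ, w', heq, hγ, hstep, hrest⟩
      · left
        intro o' ho'
        rcases List.mem_cons.1 ho' with rfl | ho'
        · exact hoP
        · exact hl o' ho'
      · right
        obtain ⟨y'', hs1, hs2⟩ := step_comm hst hstep hoP
        refine ⟨o :: γ, r', δ, y'', by simp [heq], ?_, hs1, Seq.cons hs2 hrest⟩
        intro o' ho'
        rcases List.mem_cons.1 ho' with rfl | ho'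
        · exact hoP
        · exact hγ o' ho'
    · push_neg at hoP
      obtain ⟨p, hp', hpo⟩ := hoP
      have hx : o.1 ∈ x p := hst.1.2 p hpo
      rw [hw p hp', Finset.mem_singleton] at hx
      right
      refine ⟨[], o.2, σ, y, ?_, by simp, ?_, hseq⟩
      · simp [← hx]
      · rw [← hx]
        exact hst

end SC2


section SC3
variable {N1 N2 : Negotiation Agent Atom Res} {n n' : Atom} {r : Res} {f : Res → Res}

lemma sc_main (h : ShortcutRuleAt N1 N2 n r n' f) :
    ∀ (k : ℕ) (τ : List (Atom × Res)) (x y : Marking Agent Atom), τ.length ≤ k →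
    N1.Seq x τ y → (N1.ExclusiveAccess n r n' → ∀ p, n' ∉ x p) →
    (∃ τ₂, N2.Seq x τ₂ y) ∨
    (∃ τ₂ z w γ, N2.Seq x τ₂ z ∧ N1.StepTo z (n, r) w ∧ N1.Seq w γ y ∧
      (∀ o ∈ γ, ∀ p ∈ N1.parties n', p ∉ N1.parties o.1) ∧
      (N1.ExclusiveAccess n r n' → ∀ p, n' ∉ z p)) := by
  intro k
  induction k with
  | zero =>
    intro τ x y hlen hs hinv
    rw [Nat.le_zero, List.length_eq_zero_iff] at hlen
    subst hlen
    cases hs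
    exact Or.inl ⟨[], Seq.nil _⟩
  | succ k ih =>
    intro τ x y hlen hs hinv
    cases hs with
    | nil => exact Or.inl ⟨[], Seq.nil _⟩
    | @cons x x1 y o σ hst hseq =>
      obtain ⟨m, s⟩ := o
      have hlen' : σ.length ≤ k := by simpa using hlen
      by_cases hor : (m, s) = (n, r)
      · obtain ⟨rfl, rfl⟩ : m = n ∧ s = r := Prod.mk.injEq .. ▸ hor
        have hx1 : ∀ p ∈ N1.parties n', x1 p = {n'} := by
          intro p hp
          rw [hst.2.2 p, if_pos ((sc_hUE h).1 hp)]
          exact (sc_hUE h).2 p hp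
        rcases sc_pending h hseq hx1 with hl | ⟨γ, r', δ, w', heq, hγ, hstep, hrest⟩
        · exact Or.inr ⟨[], x, x1, σ, Seq.nil _, hst, hseq, hl, hinv⟩
        · have hf : N2.StepTo x (m, f r') w' := sc_fuse12 h hst hstep
          have hinv' : N1.ExclusiveAccess m s n' → ∀ p, n' ∉ w' p := by
            intro hE p
            rw [hstep.2.2 p]
            by_cases hp' : p ∈ N1.parties n'
            · rw [if_pos hp']
              exact sc_trans_no_n' h hE h.2.1 hp' hstep.2.1
                (by simp [Prod.ext_iff, h.2.2.2.1])
            · rw [if_neg hp', hst.2.2 p]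
              by_cases hp : p ∈ N1.parties m
              · rw [if_pos hp]
                intro hmem
                exact hp' (N1.trans_parties m h.1 p hp s h.2.2.1 n' hmem)
              · rw [if_neg hp]
                exact hinv hE p
          have hlen'' : (γ ++ δ).length ≤ k := by
            rw [heq] at hlen'
            simp only [List.length_append, List.length_cons] at hlen' ⊢
            omega
          rcases ih (γ ++ δ) w' y hlen'' hrest hinv' with ⟨τ₂, h2⟩ |
            ⟨τ₂, z, w, γ', h2, h3, h4, h5, h6⟩
          · exact Or.inl ⟨(m, f r') :: τ₂, Seq.cons hf h2⟩
          · exact Or.inr ⟨(m, f r') :: τ₂, z, w, γ', Seq.cons hf h2, h3, h4, h5, h6⟩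
      · have hm2 : m ∈ N2.atoms := by
          by_cases hE : N1.ExclusiveAccess n r n'
          · have hmn' : m ≠ n' := by
              rintro rfl
              obtain ⟨p₀, hp₀⟩ := sc_P'_nonempty h
              exact hinv hE p₀ (hst.1.2 p₀ hp₀)
            exact sc_mem2_of_ne h hst.1.1 hmn'
          · rw [h.2.2.2.2.2.2.2.2.2.2.2.2.2.2.2.2.2.1 hE]
            exact hst.1.1
        have hst2 := sc_step12 h hst hor hm2
        have hinv1 : N1.ExclusiveAccess n r n' → ∀ p, n' ∉ x1 p :=
          fun hE => sc_step_inv h hE hst hor (hinv hE)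
        rcases ih σ x1 y hlen' hseq hinv1 with ⟨τ₂, h2⟩ |
          ⟨τ₂, z, w, γ', h2, h3, h4, h5, h6⟩
        · exact Or.inl ⟨(m, s) :: τ₂, Seq.cons hst2 h2⟩
        · exact Or.inr ⟨(m, s) :: τ₂, z, w, γ', Seq.cons hst2 h2, h3, h4, h5, h6⟩

end SC3


section SC4
variable {N1 N2 : Negotiation Agent Atom Res} {n n' : Atom} {r : Res} {f : Res → Res}

lemma reachable_seq {N : Negotiation Agent Atom Res} {x y : Marking Agent Atom}
    {σ : List (Atom × Res)} (hx : N.Reachable x) (hs : N.Seq x σ y) : N.Reachable y := by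
  obtain ⟨σ₀, h₀⟩ := hx
  exact ⟨σ₀ ++ σ, seq_append h₀ hs⟩

lemma sc_hn0 (h : ShortcutRuleAt N1 N2 n r n' f) : N2.n0 = N1.n0 :=
  h.2.2.2.2.2.2.2.2.1

lemma sc_x0_eq (h : ShortcutRuleAt N1 N2 n r n' f) : N2.x0 = N1.x0 := by
  funext p
  simp [x0, sc_hn0 h]

lemma sc_hcases (h : ShortcutRuleAt N1 N2 n r n' f) :
    ((n' ≠ N1.nf ∧ N1.ExclusiveAccess n r n') ∨
     (n' ≠ N1.nf ∧ ∃ (m : Atom) (r'' : Res), m ∈ N1.atoms ∧ r'' ∈ N1.results m ∧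
        (m, r'') ≠ (n, r) ∧ N1.CommitsTo m r'' n') ∨
     (n' = N1.nf ∧ N1.ExclusiveAccess n r n' ∧ N1.results n = {r})) :=
  h.2.2.2.2.2.1

lemma sc_htr1 (h : ShortcutRuleAt N1 N2 n r n' f) :
    ∀ r' ∈ N1.results n', ∀ p ∈ N1.parties n', N2.trans n p (f r') = N1.trans n' p r' := by
  obtain ⟨hn1, hn'1, hr1, hnn, hUE, hcases, hinj, hfnew, hn0, hpar, hresn, hreso,
    htr1, htr2, htr3, htr4, hatE, hatNE, hnfE, hnfNE⟩ := h
  exact htr1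

lemma sc_htr2 (h : ShortcutRuleAt N1 N2 n r n' f) :
    ∀ r' ∈ N1.results n', ∀ p ∈ N1.parties n, p ∉ N1.parties n' →
      N2.trans n p (f r') = N1.trans n p r := by
  obtain ⟨hn1, hn'1, hr1, hnn, hUE, hcases, hinj, hfnew, hn0, hpar, hresn, hreso,
    htr1, htr2, htr3, htr4, hatE, hatNE, hnfE, hnfNE⟩ := h
  exact htr2

lemma sc_htr3 (h : ShortcutRuleAt N1 N2 n r n' f) :
    ∀ r'' ∈ (N1.results n).erase r, ∀ p, N2.trans n p r'' = N1.trans n p r'' := by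
  obtain ⟨hn1, hn'1, hr1, hnn, hUE, hcases, hinj, hfnew, hn0, hpar, hresn, hreso,
    htr1, htr2, htr3, htr4, hatE, hatNE, hnfE, hnfNE⟩ := h
  exact htr3

lemma sc_htr4 (h : ShortcutRuleAt N1 N2 n r n' f) :
    ∀ m, m ≠ n → N2.trans m = N1.trans m := by
  obtain ⟨hn1, hn'1, hr1, hnn, hUE, hcases, hinj, hfnew, hn0, hpar, hresn, hreso,
    htr1, htr2, htr3, htr4, hatE, hatNE, hnfE, hnfNE⟩ := h
  exact htr4

lemma sc_inv0 (h : ShortcutRuleAt N1 N2 n r n' f)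
    (hE : N1.ExclusiveAccess n r n') : ∀ p, n' ∉ N1.x0 p := by
  intro p hmem
  simp only [x0, Finset.mem_singleton] at hmem
  have hmem2 : N1.n0 ∈ N2.atoms := sc_hn0 h ▸ N2.n0_mem
  exact sc_n'_not_mem2 h hE (hmem ▸ hmem2)

/-- Firing the fused outcome `(n, f r')` in N2. -/
lemma sc_stepn (h : ShortcutRuleAt N1 N2 n r n' f) {z : Marking Agent Atom}
    (hen : N1.Enables z n) {r' : Res} (hr' : r' ∈ N1.results n') :
    N2.StepTo z (n, f r') (fun p => if p ∈ N1.parties n' then N1.trans n' p r'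
      else if p ∈ N1.parties n then N1.trans n p r else z p) := by
  refine ⟨⟨sc_n_mem2 h, ?_⟩, ?_, ?_⟩
  · rw [sc_hpar h]; exact hen.2
  · rw [sc_resn h]
    exact Finset.mem_union_right _ (Finset.mem_image.2 ⟨r', hr', rfl⟩)
  · intro p
    rw [sc_hpar h]
    by_cases hp' : p ∈ N1.parties n'
    · have hp : p ∈ N1.parties n := (sc_hUE h).1 hp'
      simp only [if_pos hp', if_pos hp, sc_htr1 h r' hr' p hp']
    · by_cases hp : p ∈ N1.parties n
      · simp only [if_neg hp', if_pos hp, sc_htr2 h r' hr' p hp hp']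
      · simp only [if_neg hp', if_neg hp]

/-- If in N1 a marking reachable in N2 has some party of `n'` placed exactly on `n'`
and the final marking is reachable in N1, then `n'` is enabled at some N2-reachable
marking (in the non-exclusive case). -/
lemma sc_findn' (h : ShortcutRuleAt N1 N2 n r n' f)
    (hE : ¬ N1.ExclusiveAccess n r n') :
    ∀ (k : ℕ) (τ : List (Atom × Res)) (x : Marking Agent Atom), τ.length ≤ k →
    N1.Seq x τ N1.xf → N2.Reachable x → ∀ p₀ ∈ N1.parties n', x p₀ = {n'} →
    ∃ z, N2.Reachable z ∧ N2.Enables z n' := by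
  intro k
  induction k with
  | zero =>
    intro τ x hlen hs hreach p₀ hp₀ hx
    rw [Nat.le_zero, List.length_eq_zero_iff] at hlen
    subst hlen
    cases hs
    exact absurd hx.symm (by simp [xf])
  | succ k ih =>
    intro τ x hlen hs hreach p₀ hp₀ hx
    cases hs with
    | nil => exact absurd hx.symm (by simp [xf])
    | @cons x x1 y o σ hst hseq =>
      obtain ⟨m, s⟩ := o
      by_cases hp : p₀ ∈ N1.parties m
      · have hm : m ∈ x p₀ := hst.1.2 p₀ hp
        rw [hx, Finset.mem_singleton] at hm
        subst hm
        refine ⟨x, hreach, sc_n'_mem2 h hE, ?_⟩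
        rw [sc_hpar h]
        exact hst.1.2
      · have hmn : m ≠ n := by
          rintro rfl
          exact hp ((sc_hUE h).1 hp₀)
        have hmn' : m ≠ n' := by
          rintro rfl
          exact hp hp₀
        have hst2 : N2.StepTo x (m, s) x1 :=
          sc_step12 h hst (by simp [hmn]) (sc_mem2_of_ne h hst.1.1 hmn')
        have hx1 : x1 p₀ = {n'} := by
          rw [hst.2.2 p₀, if_neg hp]; exact hx
        exact ih σ x1 (by simpa using hlen) hseq (reachable_step hreach hst2) p₀ hp₀ hx1

end SC4


section SC5
variable {N1 N2 : Negotiation Agent Atom Res} {n n' : Atom} {r : Res} {f : Res → Res}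

lemma sc_reach21 (h : ShortcutRuleAt N1 N2 n r n' f) {x : Marking Agent Atom}
    (hx : N2.Reachable x) : N1.Reachable x := by
  obtain ⟨σ, hσ⟩ := hx
  rw [sc_x0_eq h] at hσ
  exact sc_fwd h hσ

lemma sc_sound12 (h : ShortcutRuleAt N1 N2 n r n' f) (hN1 : N1.Sound) : N2.Sound := by
  obtain ⟨ha1, hb1⟩ := hN1
  have hb2 : ∀ x, N2.Reachable x → ∃ τ, N2.Seq x τ N2.xf := by
    intro x hx
    obtain ⟨τ, hτ⟩ := hb1 x (sc_reach21 h hx)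
    have hinv : N1.ExclusiveAccess n r n' → ∀ p, n' ∉ x p :=
      fun hE p hmem => sc_n'_not_mem2 h hE (reachable_sub_atoms hx p hmem)
    rcases sc_main h τ.length τ x N1.xf le_rfl hτ hinv with ⟨τ₂, h2⟩ |
      ⟨τ₂, z, w, γ, h2, hzw, hwγ, hγ, _⟩
    · exact ⟨τ₂, h2⟩
    · obtain ⟨p₀, hp₀⟩ := sc_P'_nonempty h
      have hw : w p₀ = {n'} := by
        rw [hzw.2.2 p₀, if_pos ((sc_hUE h).1 hp₀)]
        exact (sc_hUE h).2 p₀ hp₀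
      have hun := seq_unchanged hwγ p₀ (fun o ho => hγ o ho p₀ hp₀)
      rw [hw] at hun
      exact absurd ((by simpa [xf] using hun.symm) : ({n'} : Finset Atom) = ∅)
        (Finset.singleton_ne_empty n')
  have haux : ∀ m ∈ N2.atoms, m ≠ n' → ∃ z, N2.Reachable z ∧ N2.Enables z m := by
    intro m hm2 hmn'
    obtain ⟨x, hxr, hxe⟩ := ha1 m (sc_atoms_sub h hm2)
    obtain ⟨σ, hσ⟩ := hxr
    rcases sc_main h σ.length σ N1.x0 x le_rfl hσ (fun hE => sc_inv0 h hE) with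
      ⟨τ₂, h2⟩ | ⟨τ₂, z, w, γ, h2, hzw, hwγ, hγ, _⟩
    · refine ⟨x, ⟨τ₂, by rw [sc_x0_eq h]; exact h2⟩, hm2, ?_⟩
      rw [sc_hpar h]; exact hxe.2
    · have hzr : N2.Reachable z := ⟨τ₂, by rw [sc_x0_eq h]; exact h2⟩
      have hxP' : ∀ p ∈ N1.parties n', x p = {n'} := by
        intro p hp
        have hw : w p = {n'} := by
          rw [hzw.2.2 p, if_pos ((sc_hUE h).1 hp)]
          exact (sc_hUE h).2 p hp
        rw [seq_unchanged hwγ p (fun o ho => hγ o ho p hp), hw]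
      have hdisj : ∀ p ∈ N1.parties n', p ∉ N1.parties m := by
        intro p hp hpm
        have hmem := hxe.2 p hpm
        rw [hxP' p hp, Finset.mem_singleton] at hmem
        exact hmn' hmem
      obtain ⟨r', hr'⟩ := N1.results_nonempty n' h.2.1
      have hstep := sc_stepn h hzw.1 hr'
      have huw : ∀ p, p ∉ N1.parties n' →
          (if p ∈ N1.parties n' then N1.trans n' p r'
            else if p ∈ N1.parties n then N1.trans n p r else z p) = w p := by
        intro p hp'
        rw [hzw.2.2 p]
        simp only [if_neg hp']
      obtain ⟨y', hy1, hy2, _⟩ := sc_replay h hwγ hγ huw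
      refine ⟨y', reachable_seq (reachable_step hzr hstep) hy1, hm2, ?_⟩
      rw [sc_hpar h]
      intro p hpm
      rw [hy2 p (fun hp' => hdisj p hp' hpm)]
      exact hxe.2 p hpm
  refine ⟨?_, hb2⟩
  intro m hm2
  by_cases hmn' : m = n'
  · have hmem : n' ∈ N2.atoms := hmn' ▸ hm2
    have hE : ¬ N1.ExclusiveAccess n r n' := fun hE => sc_n'_not_mem2 h hE hmem
    rcases sc_hcases h with ⟨_, hEx⟩ |
      ⟨hn'nf, m₀, r₀, hm₀, hr₀, hne₀, p₀, hp₀m, hcommit⟩ | ⟨_, hEx, _⟩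
    · exact absurd hEx hE
    · have hp₀ : p₀ ∈ N1.parties n' :=
        N1.trans_parties m₀ hm₀ p₀ hp₀m r₀ hr₀ n'
          (by rw [hcommit]; exact Finset.mem_singleton_self _)
      obtain ⟨x₁, hx₁r, hx₁⟩ : ∃ x₁, N2.Reachable x₁ ∧ x₁ p₀ = {n'} := by
        by_cases hm₀n' : m₀ = n'
        · obtain ⟨z, hzr, hzen⟩ := haux n (sc_n_mem2 h) (fun he => h.2.2.2.1 he.symm)
          have hen1 : N1.Enables z n := ⟨h.1, by rw [← sc_hpar h]; exact hzen.2⟩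
          have hr₀' : r₀ ∈ N1.results n' := hm₀n' ▸ hr₀
          refine ⟨_, reachable_step hzr (sc_stepn h hen1 hr₀'), ?_⟩
          simp only [if_pos hp₀]
          exact hm₀n' ▸ hcommit
        · obtain ⟨z, hzr, hzen⟩ := haux m₀ (sc_mem2_of_ne h hm₀ hm₀n') hm₀n'
          have hr₀2 : r₀ ∈ N2.results m₀ := by
            by_cases hm₀n : m₀ = n
            · have hr₀r : r₀ ≠ r := fun he => hne₀ (by rw [hm₀n, he])
              rw [hm₀n, sc_resn h]
              exact Finset.mem_union_left _ (Finset.mem_erase.2 ⟨hr₀r, hm₀n ▸ hr₀⟩)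
            · rw [sc_reso h m₀ hm₀n]; exact hr₀
          have htreq : N2.trans m₀ p₀ r₀ = {n'} := by
            by_cases hm₀n : m₀ = n
            · have hr₀r : r₀ ≠ r := fun he => hne₀ (by rw [hm₀n, he])
              rw [hm₀n, sc_htr3 h r₀ (Finset.mem_erase.2 ⟨hr₀r, hm₀n ▸ hr₀⟩) p₀, ← hm₀n]
              exact hcommit
            · rw [sc_htr4 h m₀ hm₀n]; exact hcommit
          refine ⟨_, reachable_step hzr
            (⟨hzen, hr₀2, fun p => rfl⟩ : N2.StepTo z (m₀, r₀)
              (fun p => if p ∈ N2.parties m₀ then N2.trans m₀ p r₀ else z p)), ?_⟩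
          rw [if_pos (by rw [sc_hpar h]; exact hp₀m), htreq]
      obtain ⟨τ, hτ⟩ := hb1 x₁ (sc_reach21 h hx₁r)
      obtain ⟨z, hzr, hzen⟩ := sc_findn' h hE τ.length τ x₁ le_rfl hτ hx₁r p₀ hp₀ hx₁
      exact ⟨z, hzr, hmn' ▸ hzen⟩
    · exact absurd hEx hE
  · exact haux m hm2 hmn'

lemma sc_sound21 (h : ShortcutRuleAt N1 N2 n r n' f) (hN2 : N2.Sound) : N1.Sound := by
  obtain ⟨ha2, hb2⟩ := hN2
  constructor
  · intro m hm1
    by_cases hmn' : m = n'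
    · obtain ⟨z, hzr, hzen⟩ := ha2 n (sc_n_mem2 h)
      have hzr1 := sc_reach21 h hzr
      have hstep : N1.StepTo z (n, r)
          (fun p => if p ∈ N1.parties n then N1.trans n p r else z p) :=
        ⟨⟨h.1, by rw [← sc_hpar h]; exact hzen.2⟩, h.2.2.1, fun p => rfl⟩
      refine ⟨_, reachable_step hzr1 hstep, ?_⟩
      rw [hmn']
      refine ⟨h.2.1, fun p hp => ?_⟩
      simp only [if_pos ((sc_hUE h).1 hp), (sc_hUE h).2 p hp]
      exact Finset.mem_singleton_self _
    · obtain ⟨z, hzr, hzen⟩ := ha2 m (sc_mem2_of_ne h hm1 hmn')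
      exact ⟨z, sc_reach21 h hzr, hm1, by rw [← sc_hpar h]; exact hzen.2⟩
  · intro x hx
    obtain ⟨σ, hσ⟩ := hx
    rcases sc_main h σ.length σ N1.x0 x le_rfl hσ (fun hE => sc_inv0 h hE) with
      ⟨τ₂, h2⟩ | ⟨τ₂, z, w, γ, h2, hzw, hwγ, hγ, _⟩
    · have hx2 : N2.Reachable x := ⟨τ₂, by rw [sc_x0_eq h]; exact h2⟩
      obtain ⟨τ, hτ⟩ := hb2 x hx2
      exact sc_fwd h hτ
    · obtain ⟨r', hr'⟩ := N1.results_nonempty n' h.2.1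
      have hzr : N2.Reachable z := ⟨τ₂, by rw [sc_x0_eq h]; exact h2⟩
      have hxP' : ∀ p ∈ N1.parties n', x p = {n'} := by
        intro p hp
        have hw : w p = {n'} := by
          rw [hzw.2.2 p, if_pos ((sc_hUE h).1 hp)]
          exact (sc_hUE h).2 p hp
        rw [seq_unchanged hwγ p (fun o ho => hγ o ho p hp), hw]
      have hstep1 : N1.StepTo x (n', r')
          (fun p => if p ∈ N1.parties n' then N1.trans n' p r' else x p) :=
        ⟨⟨h.2.1, fun p hp => by rw [hxP' p hp]; exact Finset.mem_singleton_self _⟩,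
          hr', fun p => rfl⟩
      have hstep2 := sc_stepn h hzw.1 hr'
      have huw : ∀ p, p ∉ N1.parties n' →
          (if p ∈ N1.parties n' then N1.trans n' p r'
            else if p ∈ N1.parties n then N1.trans n p r else z p) = w p := by
        intro p hp'
        rw [hzw.2.2 p]
        simp only [if_neg hp']
      obtain ⟨y', hy1, hy2, hy3⟩ := sc_replay h hwγ hγ huw
      have hyx : y' = fun p => if p ∈ N1.parties n' then N1.trans n' p r' else x p := by
        funext p
        by_cases hp' : p ∈ N1.parties n'
        · rw [hy3 p hp']
          simp only [if_pos hp']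
        · rw [hy2 p hp']
          simp only [if_neg hp']
      have hx'2 : N2.Reachable (fun p => if p ∈ N1.parties n' then N1.trans n' p r' else x p) :=
        hyx ▸ reachable_seq (reachable_step hzr hstep2) hy1
      obtain ⟨τ, hτ⟩ := hb2 _ hx'2
      obtain ⟨σ'', hσ''⟩ := sc_fwd h hτ
      exact ⟨(n', r') :: σ'', Seq.cons hstep1 hσ''⟩

end SC5

/-- The shortcut rule preserves soundness and unsoundness. -/
theorem statement3 (N1 N2 : Negotiation Agent Atom Res) (n n' : Atom) (r : Res)
    (f : Res → Res) (h : ShortcutRuleAt N1 N2 n r n' f) :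
    N1.Sound ↔ N2.Sound :=
  ⟨fun h1 => sc_sound12 h h1, fun h2 => sc_sound21 h h2⟩

end Negotiation
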